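/- Let N be an N-layer (open or closed) Π³-net. For every 1≤i≤N−1 and every transition t∈T, v^(i)·W(t)=0; moreover, if the net is closed, then v^(N)·W(t)=0 for every t∈T. -/

import Mathlib

open Finset

section PetriBasics

variable {P T : Type} [Fintype P] [Fintype T]

/-- Transition `t` is enabled at marking `m`. -/
def Enabled (Wm : P → T → ℕ) (m : P → ℕ) (t : T) : Prop :=
  ∀ p, Wm p t ≤ m p

/-- The marking obtained by firing transition `t` at marking `m`. -/
def Fire (Wm Wp : P → T → ℕ) (m : P → ℕ) (t : T) : P → ℕ :=
  fun p => m p - Wm p t + Wp p t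

/-- One firing step. -/
def Step (Wm Wp : P → T → ℕ) (m m' : P → ℕ) : Prop :=
  ∃ t, Enabled Wm m t ∧ m' = Fire Wm Wp m t

/-- Reachability. -/
def Reach (Wm Wp : P → T → ℕ) : (P → ℕ) → (P → ℕ) → Prop :=
  Relation.ReflTransGen (Step Wm Wp)

/-- One firing step using a transition from the set `S`. -/
def StepIn (Wm Wp : P → T → ℕ) (S : T → Prop) (m m' : P → ℕ) : Prop :=
  ∃ t, S t ∧ Enabled Wm m t ∧ m' = Fire Wm Wp m t

/-- Reachability using only transitions from the set `S`. -/
def ReachIn (Wm Wp : P → T → ℕ) (S : T → Prop) : (P → ℕ) → (P → ℕ) → Prop :=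
  Relation.ReflTransGen (StepIn Wm Wp S)

/-- The marked net `(N, m0)` is live. -/
def LiveMarked (Wm Wp : P → T → ℕ) (m0 : P → ℕ) : Prop :=
  ∀ (t : T) (m : P → ℕ), Reach Wm Wp m0 m →
    ∃ m', Reach Wm Wp m m' ∧ Enabled Wm m' t

/-- `b` is a bag of the net. -/
def IsBag (Wm Wp : P → T → ℕ) (b : P → ℕ) : Prop :=
  ∃ t, b = (fun p => Wm p t) ∨ b = (fun p => Wp p t)

/-- Edges of the bag graph. -/
def BagEdge (Wm Wp : P → T → ℕ) (b b' : P → ℕ) : Prop :=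
  ∃ t, b = (fun p => Wm p t) ∧ b' = (fun p => Wp p t)

/-- Every connected component of the bag graph is strongly connected. -/
def WeaklyReversible (Wm Wp : P → T → ℕ) : Prop :=
  ∀ b b' : P → ℕ,
    Relation.ReflTransGen (fun x y => BagEdge Wm Wp x y ∨ BagEdge Wm Wp y x) b b' →
    Relation.ReflTransGen (BagEdge Wm Wp) b b'

/-- `w · W(t)`, where `W = W⁺ − W⁻` is the incidence matrix. -/
def IncDot (Wm Wp : P → T → ℕ) (w : P → ℚ) (t : T) : ℚ :=
  ∑ p, w p * ((Wp p t : ℚ) - (Wm p t : ℚ))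

/-- `w` is a witness of the bag `b`. -/
def IsWitness (Wm Wp : P → T → ℕ) (b : P → ℕ) (w : P → ℚ) : Prop :=
  ∀ t, (b = (fun p => Wm p t) → IncDot Wm Wp w t = -1) ∧
       (b = (fun p => Wp p t) → IncDot Wm Wp w t = 1) ∧
       (b ≠ (fun p => Wm p t) → b ≠ (fun p => Wp p t) → IncDot Wm Wp w t = 0)

/-- `N` is a Π²-net. -/
def IsPi2 (Wm Wp : P → T → ℕ) : Prop :=
  WeaklyReversible Wm Wp ∧ ∀ b, IsBag Wm Wp b → ∃ w, IsWitness Wm Wp b w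

/-- The potential of a place: `‖b_p‖ − 1`. -/
def potOf (bag : P → P → ℕ) (p : P) : ℕ := (∑ q, bag p q) - 1

/-- Minimum of `f` over `S`, with default value `d` when `S` is empty. -/
def minPotD {α : Type} (S : Finset α) (f : α → ℕ) (d : ℕ) : ℕ :=
  if h : S.Nonempty then S.inf' h f else d

end PetriBasics

/-- An `Nn`-layer closed Π³-net. -/
structure ClosedPi3 (P T : Type) [Fintype P] [Fintype T] (Nn : ℕ) where
  Wm : P → T → ℕ
  Wp : P → T → ℕ
  no_useless : ∀ t, (fun p => Wm p t) ≠ (fun p => Wp p t)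
  no_dup : ∀ t t' : T, (fun p => Wm p t) = (fun p => Wm p t') →
      (fun p => Wp p t) = (fun p => Wp p t') → t = t'
  /-- the bag associated with each place -/
  bag : P → P → ℕ
  /-- the layer of each place -/
  layer : P → ℕ
  bag_isBag : ∀ p, IsBag Wm Wp (bag p)
  bag_surj : ∀ b, IsBag Wm Wp b → ∃ p, bag p = b
  bag_inj : Function.Injective bag
  bag_self : ∀ p, bag p p = 1
  layer_pos : ∀ p, 1 ≤ layer p
  layer_le : ∀ p, layer p ≤ Nn
  layer_surj : ∀ i, 1 ≤ i → i ≤ Nn → ∃ p, layer p = i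
  edge_layer : ∀ p q : P, BagEdge Wm Wp (bag p) (bag q) → layer p = layer q
  layer_conn : ∀ p q : P, layer p = layer q →
      Relation.ReflTransGen (BagEdge Wm Wp) (bag p) (bag q)
  resource : ∀ p q : P, q ≠ p → 0 < bag p q →
      layer q + 1 = layer p ∧ ∀ r, layer r = layer q → potOf bag r ≤ potOf bag q

namespace ClosedPi3

variable {P T : Type} [Fintype P] [Fintype T] {Nn : ℕ} (C : ClosedPi3 P T Nn)

def pot (p : P) : ℕ := potOf C.bag p

/-- `P_i`: the places of layer `i`. -/
def places (i : ℕ) : Finset P := Finset.univ.filter (fun p => C.layer p = i)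

/-- `POT_i`: the maximal potential in layer `i`. -/
def POT (i : ℕ) : ℕ := (C.places i).sup C.pot

/-- `P_i^max`: the places of maximal potential in layer `i`. -/
def placesMax (i : ℕ) : Finset P := (C.places i).filter (fun p => C.pot p = C.POT i)

/-- `cin(p) = POT_i − pot(p)` for `p ∈ P_i`. -/
def cin (p : P) : ℤ := (C.POT (C.layer p) : ℤ) - (C.pot p : ℤ)

/-- The invariant vector `v^(i)` (for `i = Nn` this is `v^(N)`). -/
def vvec (i : ℕ) : P → ℤ :=
  if i = Nn then (fun p => if C.layer p = Nn then 1 else 0)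
  else fun p => (if C.layer p = i then 1 else 0) + (if C.layer p = i + 1 then C.cin p else 0)

/-- `m · v^(i)`. -/
def vdot (i : ℕ) (m : P → ℕ) : ℤ := ∑ p, C.vvec i p * (m p : ℤ)

/-- `m ∈ Inv_i(m0)`. -/
def InvSet (m0 : P → ℕ) (i : ℕ) (m : P → ℕ) : Prop := C.vdot i m = C.vdot i m0

/-- `m ∈ Live_i`. -/
def LiveSet (i : ℕ) (m : P → ℕ) : Prop :=
  if i = Nn then 0 < ∑ p ∈ C.places Nn, m p
  else minPotD ((C.places (i + 1)).filter (fun p => 0 < m p)) C.pot (C.POT (i + 1))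
        ≤ ∑ p ∈ C.places i, m p

/-- `t` belongs to `⋃ {T_i | S i}`: the input bag of `t` lies in a layer satisfying `S`. -/
def transIn (S : ℕ → Prop) (t : T) : Prop :=
  ∃ p, S (C.layer p) ∧ C.bag p = (fun q => C.Wm q t)

/-- The marking `m` is `i`-live. -/
def iLive (i : ℕ) (m : P → ℕ) : Prop :=
  ∀ t, C.transIn (· ≤ i) t →
    ∃ m', ReachIn C.Wm C.Wp (C.transIn (· ≤ i)) m m' ∧ Enabled C.Wm m' t

end ClosedPi3

/-- An `Nn`-layer open Π³-net over places `P`: it is obtained from an `Nn`-layer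
closed Π³-net over `Option P` by deleting the place `none` (a.k.a. `p_ext`),
which lies in layer `Nn`. -/
structure OpenPi3 (P T : Type) [Fintype P] [Fintype T] (Nn : ℕ) where
  closed : ClosedPi3 (Option P) T Nn
  pext_layer : closed.layer none = Nn

namespace OpenPi3

variable {P T : Type} [Fintype P] [Fintype T] {Nn : ℕ} (O : OpenPi3 P T Nn)

/-- Backward incidence matrix of the open net. -/
def Wm : P → T → ℕ := fun p t => O.closed.Wm (some p) t

/-- Forward incidence matrix of the open net. -/
def Wp : P → T → ℕ := fun p t => O.closed.Wp (some p) t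

def layer (p : P) : ℕ := O.closed.layer (some p)

def pot (p : P) : ℕ := O.closed.pot (some p)

/-- `pot(p_ext)`. -/
def potExt : ℕ := O.closed.pot none

/-- `P_i`: the (remaining) places of layer `i`. -/
def places (i : ℕ) : Finset P := Finset.univ.filter (fun p => O.layer p = i)

/-- `POT_i`, with `POT_N = pot(p_ext)` for open nets. -/
def POT (i : ℕ) : ℕ := if i = Nn then O.potExt else (O.places i).sup O.pot

def placesMax (i : ℕ) : Finset P := (O.places i).filter (fun p => O.pot p = O.POT i)

def cin (p : P) : ℤ := (O.POT (O.layer p) : ℤ) - (O.pot p : ℤ)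

/-- The invariant vector `v^(i)` (used for `1 ≤ i ≤ Nn − 1`). -/
def vvec (i : ℕ) : P → ℤ :=
  fun p => (if O.layer p = i then 1 else 0) + (if O.layer p = i + 1 then O.cin p else 0)

def vdot (i : ℕ) (m : P → ℕ) : ℤ := ∑ p, O.vvec i p * (m p : ℤ)

def InvSet (m0 : P → ℕ) (i : ℕ) (m : P → ℕ) : Prop :=
  if i = Nn then True else O.vdot i m = O.vdot i m0

/-- `m ∈ Live_i` for the open net: for `i = N − 1` the virtual place `p_ext`
always counts as marked. -/
def LiveSet (i : ℕ) (m : P → ℕ) : Prop :=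
  if i = Nn then True
  else if i + 1 = Nn then
    min O.potExt
        (minPotD ((O.places Nn).filter (fun p => 0 < m p)) O.pot O.potExt)
      ≤ ∑ p ∈ O.places i, m p
  else
    minPotD ((O.places (i + 1)).filter (fun p => 0 < m p)) O.pot (O.POT (i + 1))
      ≤ ∑ p ∈ O.places i, m p

def transIn (S : ℕ → Prop) (t : T) : Prop := O.closed.transIn S t

def iLive (i : ℕ) (m : P → ℕ) : Prop :=
  ∀ t, O.transIn (· ≤ i) t →
    ∃ m', ReachIn O.Wm O.Wp (O.transIn (· ≤ i)) m m' ∧ Enabled O.Wm m' t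

end OpenPi3

section AuxStmt2

variable {Q T : Type} [Fintype Q] [Fintype T] {Nn : ℕ} (C : ClosedPi3 Q T Nn)

lemma aux_supp_pot {p₀ q : Q} (hq : q ≠ p₀) (h : 0 < C.bag p₀ q) :
    C.pot q = C.POT (C.layer q) := by
  classical
  obtain ⟨-, h2⟩ := C.resource p₀ q hq h
  refine le_antisymm (Finset.le_sup ?_) (Finset.sup_le fun r hr => h2 r ?_)
  · simp [ClosedPi3.places]
  · simpa [ClosedPi3.places] using hr

lemma aux_dot_bag (w : Q → ℤ) (p₀ : Q) (c : ℤ)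
    (hc : ∀ q, q ≠ p₀ → 0 < C.bag p₀ q → w q = c) :
    ∑ q, w q * (C.bag p₀ q : ℤ) = w p₀ + c * (C.pot p₀ : ℤ) := by
  classical
  have hsplit : ∑ q, w q * (C.bag p₀ q : ℤ)
      = w p₀ * (C.bag p₀ p₀ : ℤ)
        + ∑ q ∈ Finset.univ.erase p₀, w q * (C.bag p₀ q : ℤ) :=
    (Finset.add_sum_erase _ _ (Finset.mem_univ p₀)).symm
  rw [hsplit, C.bag_self, Nat.cast_one, mul_one]
  congr 1
  have hcong : ∀ q ∈ Finset.univ.erase p₀,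
      w q * (C.bag p₀ q : ℤ) = c * (C.bag p₀ q : ℤ) := by
    intro q hq
    rcases Nat.eq_zero_or_pos (C.bag p₀ q) with h | h
    · simp [h]
    · rw [hc q (Finset.mem_erase.1 hq).1 h]
  rw [Finset.sum_congr rfl hcong, ← Finset.mul_sum]
  congr 1
  have h1 : C.bag p₀ p₀ + ∑ q ∈ Finset.univ.erase p₀, C.bag p₀ q
      = ∑ q, C.bag p₀ q :=
    Finset.add_sum_erase Finset.univ (C.bag p₀) (Finset.mem_univ p₀)
  have h2 : C.pot p₀ = (∑ q, C.bag p₀ q) - 1 := rfl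
  have h3 : C.bag p₀ p₀ = 1 := C.bag_self p₀
  have h4 : ∑ q ∈ Finset.univ.erase p₀, C.bag p₀ q = C.pot p₀ := by omega
  rw [← h4, Nat.cast_sum]

lemma aux_generic_formula (i : ℕ) (K : ℤ)
    (hK : ∀ q : Q, C.layer q = i + 2 → K = (C.POT (i + 1) : ℤ)) (p₀ : Q) :
    ∑ q, ((if C.layer q = i then (1 : ℤ) else 0)
          + (if C.layer q = i + 1 then K - (C.pot q : ℤ) else 0))
        * (C.bag p₀ q : ℤ)
      = if C.layer p₀ = i then 1 else if C.layer p₀ = i + 1 then K else 0 := by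
  by_cases h1 : C.layer p₀ = i + 1
  · rw [aux_dot_bag C _ p₀ 1 (fun q hq hpos => by
      have hl := (C.resource p₀ q hq hpos).1
      have hqi : C.layer q = i := by omega
      simp [hqi, (by omega : ¬ i = i + 1)])]
    beta_reduce
    split_ifs <;> omega
  · by_cases h2 : C.layer p₀ = i + 2
    · rw [aux_dot_bag C _ p₀ 0 (fun q hq hpos => by
        have hl := (C.resource p₀ q hq hpos).1
        have hqi : C.layer q = i + 1 := by omega
        have hpot := aux_supp_pot C hq hpos
        rw [hqi] at hpot
        simp [hqi, (by omega : ¬ i + 1 = i), hpot, hK p₀ h2])]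
      beta_reduce
      split_ifs <;> omega
    · rw [aux_dot_bag C _ p₀ 0 (fun q hq hpos => by
        have hl := (C.resource p₀ q hq hpos).1
        have hq1 : ¬ C.layer q = i := by omega
        have hq2 : ¬ C.layer q = i + 1 := by omega
        simp [hq1, hq2])]
      beta_reduce
      split_ifs <;> omega

lemma aux_top_formula (p₀ : Q) :
    ∑ q, (if C.layer q = Nn then (1 : ℤ) else 0) * (C.bag p₀ q : ℤ)
      = if C.layer p₀ = Nn then 1 else 0 := by
  rw [aux_dot_bag C _ p₀ 0 (fun q hq hpos => by
    have hl := (C.resource p₀ q hq hpos).1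
    have hle := C.layer_le p₀
    have hne : ¬ C.layer q = Nn := by omega
    simp [hne])]
  beta_reduce
  split_ifs <;> omega

lemma aux_closed_formula (i : ℕ) (hiN : i ≠ Nn) (p₀ : Q) :
    ∑ q, C.vvec i q * (C.bag p₀ q : ℤ)
      = if C.layer p₀ = i then 1
        else if C.layer p₀ = i + 1 then (C.POT (i + 1) : ℤ) else 0 := by
  have hw : ∀ q, C.vvec i q
      = (if C.layer q = i then (1 : ℤ) else 0)
        + (if C.layer q = i + 1 then (C.POT (i + 1) : ℤ) - (C.pot q : ℤ) else 0) := by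
    intro q
    simp only [ClosedPi3.vvec, hiN, if_false]
    congr 1
    by_cases h : C.layer q = i + 1
    · simp [h, ClosedPi3.cin]
    · simp [h]
  simp only [hw]
  exact aux_generic_formula C i _ (fun _ _ => rfl) p₀

lemma aux_closed_inv (i : ℕ) (hi : i ∈ Finset.Icc 1 Nn) (t : T) :
    ∑ p, C.vvec i p * ((C.Wp p t : ℤ) - (C.Wm p t : ℤ)) = 0 := by
  obtain ⟨pm, hpm⟩ := C.bag_surj _ ⟨t, Or.inl rfl⟩
  obtain ⟨pp, hpp⟩ := C.bag_surj _ ⟨t, Or.inr rfl⟩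
  have hlay : C.layer pm = C.layer pp := C.edge_layer _ _ ⟨t, hpm, hpp⟩
  have hsum : ∑ p, C.vvec i p * ((C.Wp p t : ℤ) - (C.Wm p t : ℤ))
      = (∑ p, C.vvec i p * (C.bag pp p : ℤ))
        - ∑ p, C.vvec i p * (C.bag pm p : ℤ) := by
    rw [← Finset.sum_sub_distrib]
    refine Finset.sum_congr rfl fun p _ => ?_
    rw [← congrFun hpm p, ← congrFun hpp p] at *
    ring
  rw [hsum]
  rcases eq_or_ne i Nn with hiN | hiN
  · have hv : ∀ q, C.vvec i q = if C.layer q = Nn then (1 : ℤ) else 0 := by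
      intro q; simp [ClosedPi3.vvec, hiN]
    simp only [hv]
    rw [aux_top_formula, aux_top_formula, hlay, sub_self]
  · rw [aux_closed_formula C i hiN, aux_closed_formula C i hiN, hlay, sub_self]

end AuxStmt2

section AuxOpen

variable {P T : Type} [Fintype P] [Fintype T] {Nn : ℕ} (O : OpenPi3 P T Nn)

lemma aux_open_inv (i : ℕ) (hi : i ∈ Finset.Icc 1 (Nn - 1)) (t : T) :
    ∑ p, O.vvec i p * ((O.Wp p t : ℤ) - (O.Wm p t : ℤ)) = 0 := by
  classical
  obtain ⟨hi1, hi2⟩ := Finset.mem_Icc.1 hi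
  have hN : 2 ≤ Nn := by omega
  obtain ⟨pm, hpm⟩ := O.closed.bag_surj _ ⟨t, Or.inl rfl⟩
  obtain ⟨pp, hpp⟩ := O.closed.bag_surj _ ⟨t, Or.inr rfl⟩
  have hlay : O.closed.layer pm = O.closed.layer pp :=
    O.closed.edge_layer _ _ ⟨t, hpm, hpp⟩
  have hK2 : ∀ q : Option P, O.closed.layer q = i + 2 →
      ((O.POT (i + 1) : ℤ)) = (O.closed.POT (i + 1) : ℤ) := by
    intro q hq
    have hle := O.closed.layer_le q
    have hlt : i + 1 < Nn := by omega
    have h1 : O.POT (i + 1) = (O.places (i + 1)).sup O.pot := by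
      unfold OpenPi3.POT
      rw [if_neg (by omega : ¬ i + 1 = Nn)]
    have h2 : (O.places (i + 1)).sup O.pot = O.closed.POT (i + 1) := by
      apply le_antisymm
      · refine Finset.sup_le fun p hp => ?_
        have hlp : O.layer p = i + 1 := by simpa [OpenPi3.places] using hp
        exact Finset.le_sup (f := O.closed.pot)
          (by simpa [ClosedPi3.places, OpenPi3.layer] using hlp)
      · refine Finset.sup_le fun q' hq' => ?_
        have hlq : O.closed.layer q' = i + 1 := by
          simpa [ClosedPi3.places] using hq'
        rcases q' with _ | p
        · rw [O.pext_layer] at hlq; omega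
        · exact Finset.le_sup (f := O.pot)
            (Finset.mem_filter.2 ⟨Finset.mem_univ _, hlq⟩)
    have := h1.trans h2
    exact_mod_cast this
  set w : Option P → ℤ := fun q =>
    (if O.closed.layer q = i then (1 : ℤ) else 0)
      + (if O.closed.layer q = i + 1 then (O.POT (i + 1) : ℤ) - (O.closed.pot q : ℤ) else 0)
    with hwdef
  have hwnone : w none = 0 := by
    show (if O.closed.layer (none : Option P) = i then (1 : ℤ) else 0)
        + (if O.closed.layer (none : Option P) = i + 1
            then (O.POT (i + 1) : ℤ) - (O.closed.pot none : ℤ) else 0) = 0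
    rw [O.pext_layer, if_neg (by omega : ¬ Nn = i)]
    rcases eq_or_ne (i + 1) Nn with he | he
    · rw [if_pos he.symm]
      have hpe : O.POT (i + 1) = O.closed.pot none := by
        unfold OpenPi3.POT
        rw [if_pos he]
        rfl
      rw [hpe]; ring
    · rw [if_neg (fun h => he h.symm)]; ring
  have hwsome : ∀ p : P, O.vvec i p = w (some p) := by
    intro p
    show _ = (if O.closed.layer (some p) = i then (1 : ℤ) else 0)
        + (if O.closed.layer (some p) = i + 1
            then (O.POT (i + 1) : ℤ) - (O.closed.pot (some p) : ℤ) else 0)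
    simp only [OpenPi3.vvec, OpenPi3.layer, OpenPi3.cin, OpenPi3.pot]
    by_cases h : O.closed.layer (some p) = i + 1
    · simp [h]
    · simp [h]; congr
  have key : ∀ p₀ : Option P,
      ∑ q, w q * (O.closed.bag p₀ q : ℤ)
        = if O.closed.layer p₀ = i then 1
          else if O.closed.layer p₀ = i + 1 then (O.POT (i + 1) : ℤ) else 0 :=
    fun p₀ => aux_generic_formula O.closed i _ hK2 p₀
  calc ∑ p, O.vvec i p * ((O.Wp p t : ℤ) - (O.Wm p t : ℤ))
      = ∑ q : Option P, w q * ((O.closed.Wp q t : ℤ) - (O.closed.Wm q t : ℤ)) := by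
        rw [Fintype.sum_option, hwnone, zero_mul, zero_add]
        exact Finset.sum_congr rfl fun p _ => by rw [hwsome p]; rfl
    _ = (∑ q, w q * (O.closed.bag pp q : ℤ))
          - ∑ q, w q * (O.closed.bag pm q : ℤ) := by
        rw [← Finset.sum_sub_distrib]
        refine Finset.sum_congr rfl fun q _ => ?_
        rw [← congrFun hpm q, ← congrFun hpp q] at *
        ring
    _ = 0 := by rw [key, key, hlay, sub_self]

end AuxOpen
/-- The vectors `v^(i)` (for `1 ≤ i ≤ N−1`, and also `v^(N)` in the
closed case) are linear invariants: `v^(i) · W(t) = 0` for every transition. -/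
theorem stmt_2 :
    (∀ (P T : Type) [Fintype P] [Fintype T] (Nn : ℕ) (C : ClosedPi3 P T Nn),
      ∀ i ∈ Finset.Icc 1 Nn, ∀ t : T,
        ∑ p, C.vvec i p * ((C.Wp p t : ℤ) - (C.Wm p t : ℤ)) = 0) ∧
    (∀ (P T : Type) [Fintype P] [Fintype T] (Nn : ℕ) (O : OpenPi3 P T Nn),
      ∀ i ∈ Finset.Icc 1 (Nn - 1), ∀ t : T,
        ∑ p, O.vvec i p * ((O.Wp p t : ℤ) - (O.Wm p t : ℤ)) = 0) := by
  constructor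
  · intro P T _ _ Nn C i hi t
    exact aux_closed_inv C i hi t
  · intro P T _ _ Nn O i hi t
    exact aux_open_inv O i hi t
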